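/- (Conjugacy with the Bernoulli shift) Let f : ℝ × ℝ → ℝ be continuous and 1-periodic in the time variable, and suppose the equation x' = f(t,x) admits a solution x with x(t+2) = x(t) for all t ∈ ℝ and x(t₁+1) ≠ x(t₁) for some t₁ ∈ ℝ. Then there exists a compact subset W of C(ℝ,ℝ) such that: every w ∈ W is a solution of x' = f(t,x); W is invariant under the time-one shift ψ₁ (ψ₁(W) = W) and ψ₁ restricted to W is a homeomorphism of W; and there exists a homeomorphism φ : Σ₂ → W satisfying φ ∘ σ = ψ₁ ∘ φ, where σ is the two-sided Bernoulli shift on Σ₂. -/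

import Mathlib

open Set Filter Topology

/-- `x` is a (classical) solution of the ODE `x' = f(t,x)` on the whole real line. -/
def IsSolution (f : ℝ × ℝ → ℝ) (x : ℝ → ℝ) : Prop :=
  ∀ t : ℝ, HasDerivAt x (f (t, x t)) t

/-- The time-one shift `ψ₁` on `C(ℝ, ℝ)`: `shiftOne w = w (· + 1)`. -/
def shiftOne (w : C(ℝ, ℝ)) : C(ℝ, ℝ) :=
  w.comp ⟨fun t => t + 1, by continuity⟩

/-- The two-sided Bernoulli shift on `Σ₂ = {0,1}^ℤ`. -/
def bernoulliShift (s : ℤ → Fin 2) : ℤ → Fin 2 := fun i => s (i + 1)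

/-- branch selector: 0 or 1 -/
def Bsel (η : ℤ → Fin 2) (k : ℤ) : ℤ := (((η k).val : ℤ) + k) % 2

noncomputable def W0 (x : ℝ → ℝ) (t₀ : ℝ) (η : ℤ → Fin 2) (t : ℝ) : ℝ :=
  x (t + Bsel η ⌊t - t₀⌋)

lemma Bsel_mem (η : ℤ → Fin 2) (k : ℤ) : Bsel η k = 0 ∨ Bsel η k = 1 := by
  have := (η k).isLt; unfold Bsel; omega

lemma diff_step {x : ℝ → ℝ} (hx2 : ∀ t : ℝ, x (t + 2) = x t) (t : ℝ) (k : ℤ) :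
    x (t + k + 1) - x (t + k) = x (t + 1) - x t ∨
    x (t + k + 1) - x (t + k) = -(x (t + 1) - x t) := by
  induction k using Int.induction_on with
  | zero => left; norm_num
  | succ n ih =>
    have e1 : t + ((n : ℤ) + 1 : ℤ) + 1 = (t + (n : ℤ)) + 2 := by push_cast; ring
    have e2 : t + ((n : ℤ) + 1 : ℤ) = (t + (n : ℤ)) + 1 := by push_cast; ring
    rw [e1, e2, hx2 (t + (n : ℤ))]
    rcases ih with h | h
    · right; linarith
    · left; linarith
  | pred n ih =>
    have e1 : t + (-(n : ℤ) - 1 : ℤ) + 1 = t + (-(n : ℤ) : ℤ) := by push_cast; ring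
    have e2 : t + (-(n : ℤ) - 1 : ℤ) = (t + (-(n : ℤ) : ℤ) + 1) - 2 := by push_cast; ring
    have e3 : (t + (-(n : ℤ) : ℤ) + 1) - 2 + 2 = t + (-(n : ℤ) : ℤ) + 1 := by ring
    have h2 := hx2 ((t + ((-(n : ℤ) : ℤ) : ℝ) + 1) - 2)
    rw [e3] at h2
    rw [e1, e2, ← h2]
    rcases ih with h | h
    · right; linarith
    · left; linarith

lemma junction {x : ℝ → ℝ} (hx2 : ∀ t : ℝ, x (t + 2) = x t) {t₀ : ℝ}
    (hj : x (t₀ + 1) = x t₀) (k : ℤ) : x (t₀ + k + 1) = x (t₀ + k) := by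
  rcases diff_step hx2 t₀ k with h | h <;> linarith

lemma floor_eq_of {t₀ t : ℝ} (k : ℤ) (h1 : t₀ + k ≤ t) (h2 : t < t₀ + k + 1) :
    ⌊t - t₀⌋ = k := by
  rw [Int.floor_eq_iff]
  constructor
  · linarith
  · push_cast; linarith

lemma W0_eq_on {x : ℝ → ℝ} {t₀ : ℝ} (η : ℤ → Fin 2) {k : ℤ} {t : ℝ}
    (h1 : t₀ + k ≤ t) (h2 : t < t₀ + k + 1) :
    W0 x t₀ η t = x (t + Bsel η k) := by
  rw [W0, floor_eq_of k h1 h2]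

lemma hasDeriv_shift {f : ℝ × ℝ → ℝ} {x : ℝ → ℝ}
    (hx : IsSolution f x) (hper : ∀ t x : ℝ, f (t + 1, x) = f (t, x))
    (c : ℤ) (hc : c = 0 ∨ c = 1) (t : ℝ) :
    HasDerivAt (fun s => x (s + c)) (f (t, x (t + c))) t := by
  have h := (hx (t + c)).comp t ((hasDerivAt_id t).add_const (c : ℝ))
  rw [mul_one] at h
  have hfe : f (t + c, x (t + c)) = f (t, x (t + c)) := by
    rcases hc with rfl | rfl
    · norm_num
    · push_cast; exact hper t _
  rw [hfe] at h
  exact h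

lemma W0_hasDeriv {f : ℝ × ℝ → ℝ} {x : ℝ → ℝ} {t₀ : ℝ}
    (hx : IsSolution f x) (hper : ∀ t x : ℝ, f (t + 1, x) = f (t, x))
    (hx2 : ∀ t : ℝ, x (t + 2) = x t) (hj : x (t₀ + 1) = x t₀)
    (η : ℤ → Fin 2) (t : ℝ) :
    HasDerivAt (W0 x t₀ η) (f (t, W0 x t₀ η t)) t := by
  set k := ⌊t - t₀⌋ with hk
  have hfl : (k : ℝ) ≤ t - t₀ := Int.floor_le _
  have hfu : t - t₀ < k + 1 := Int.lt_floor_add_one _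
  have hW0t : W0 x t₀ η t = x (t + Bsel η k) := by
    exact W0_eq_on η (by linarith) (by linarith)
  have hval : ∀ c : ℤ, c = 0 ∨ c = 1 → x (t₀ + k + c) = x (t₀ + k) := by
    intro c hc
    rcases hc with rfl | rfl
    · norm_num
    · push_cast
      exact junction hx2 hj k
  rcases eq_or_lt_of_le (show t₀ + (k : ℝ) ≤ t by linarith) with heq | hlt
  · -- junction point : t = t₀ + k
    have hL : HasDerivWithinAt (W0 x t₀ η) (f (t, W0 x t₀ η t)) (Iic t) t := by
      have hd := (hasDeriv_shift hx hper (Bsel η (k - 1)) (Bsel_mem η (k - 1)) t).hasDerivWithinAt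
        (s := Iic t)
      have hvv : x (t + Bsel η (k - 1)) = W0 x t₀ η t := by
        rw [hW0t, ← heq]
        rw [show t₀ + (k : ℝ) + (Bsel η (k-1) : ℝ) = t₀ + (k:ℝ) + ((Bsel η (k-1) : ℤ) : ℝ) by norm_num]
        rw [hval _ (Bsel_mem η (k-1)), hval _ (Bsel_mem η k)]
      rw [hvv] at hd
      refine hd.congr_of_eventuallyEq ?_ hvv.symm
      filter_upwards [Ioc_mem_nhdsLE (show t - 1 < t by linarith)] with s hs
      rcases eq_or_lt_of_le hs.2 with rfl | hst
      · exact hvv.symm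
      · refine W0_eq_on η ?_ ?_
        · have : t₀ + ((k : ℝ) - 1) = t - 1 := by linarith [heq]
          push_cast; linarith [hs.1]
        · push_cast; linarith [heq]
    have hR : HasDerivWithinAt (W0 x t₀ η) (f (t, W0 x t₀ η t)) (Ici t) t := by
      have hd := (hasDeriv_shift hx hper (Bsel η k) (Bsel_mem η k) t).hasDerivWithinAt
        (s := Ici t)
      rw [← hW0t] at hd
      refine hd.congr_of_eventuallyEq ?_ rfl
      filter_upwards [Ico_mem_nhdsGE (show t < t + 1 by linarith)] with s hs
      have h1 : t₀ + (k : ℝ) ≤ s := by linarith [hs.1]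
      have h2 : s < t₀ + (k : ℝ) + 1 := by linarith [hs.2]
      rw [W0_eq_on η h1 h2]
    have := hL.union hR
    rw [Iic_union_Ici] at this
    exact hasDerivWithinAt_univ.mp this
  · -- interior point
    have hev : W0 x t₀ η =ᶠ[𝓝 t] fun s => x (s + Bsel η k) := by
      filter_upwards [Ioo_mem_nhds hlt (show t < t₀ + k + 1 by linarith)] with s hs
      exact W0_eq_on η hs.1.le hs.2
    have hd := hasDeriv_shift hx hper (Bsel η k) (Bsel_mem η k) t
    rw [← hW0t] at hd
    exact hd.congr_of_eventuallyEq hev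

lemma W0_continuous {f : ℝ × ℝ → ℝ} {x : ℝ → ℝ} {t₀ : ℝ}
    (hx : IsSolution f x) (hper : ∀ t x : ℝ, f (t + 1, x) = f (t, x))
    (hx2 : ∀ t : ℝ, x (t + 2) = x t) (hj : x (t₀ + 1) = x t₀)
    (η : ℤ → Fin 2) : Continuous (W0 x t₀ η) :=
  Differentiable.continuous fun t => (W0_hasDeriv hx hper hx2 hj η t).differentiableAt

lemma W0_shift {x : ℝ → ℝ} {t₀ : ℝ} (hx2 : ∀ t : ℝ, x (t + 2) = x t)
    (η : ℤ → Fin 2) (t : ℝ) :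
    W0 x t₀ η (t + 1) = W0 x t₀ (bernoulliShift η) t := by
  have hfl : ⌊t + 1 - t₀⌋ = ⌊t - t₀⌋ + 1 := by
    rw [show t + 1 - t₀ = (t - t₀) + ((1 : ℤ) : ℝ) by push_cast; ring, Int.floor_add_intCast]
  set k := ⌊t - t₀⌋ with hk
  unfold W0 bernoulliShift Bsel
  rw [hfl]
  set a : ℤ := ((η (k + 1)).val : ℤ) with ha
  have h : (a + (k + 1)) % 2 + 1 = (a + k) % 2 ∨ (a + (k + 1)) % 2 + 1 = (a + k) % 2 + 2 := by
    omega
  rcases h with h | h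
  · have hr : (((a + (k + 1)) % 2 : ℤ) : ℝ) + 1 = (((a + k) % 2 : ℤ) : ℝ) := by
      exact_mod_cast congrArg (fun z : ℤ => (z : ℝ)) h
    congr 1
    linarith
  · have hr : (((a + (k + 1)) % 2 : ℤ) : ℝ) + 1 = (((a + k) % 2 : ℤ) : ℝ) + 2 := by
      exact_mod_cast congrArg (fun z : ℤ => (z : ℝ)) h
    rw [show t + 1 + (((a + (k + 1)) % 2 : ℤ) : ℝ) = (t + (((a + k) % 2 : ℤ) : ℝ)) + 2 by
      linarith]
    exact hx2 _

lemma W0_inj {x : ℝ → ℝ} {t₀ τ : ℝ} (hx2 : ∀ t : ℝ, x (t + 2) = x t)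
    (hτ1 : t₀ < τ) (hτ2 : τ < t₀ + 1) (hτ : x (τ + 1) ≠ x τ) :
    Function.Injective (W0 x t₀) := by
  intro η η' h
  by_contra hne
  obtain ⟨k, hk⟩ := Function.ne_iff.mp hne
  have hfl : ⌊(τ + (k : ℝ)) - t₀⌋ = k := by
    rw [show τ + (k : ℝ) - t₀ = (τ - t₀) + ((k : ℤ) : ℝ) by push_cast; ring,
      Int.floor_add_intCast]
    have h0 : ⌊τ - t₀⌋ = 0 := by
      rw [Int.floor_eq_iff]
      norm_num
      constructor <;> linarith
    rw [h0, zero_add]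
  have h1 := congrFun h (τ + (k : ℝ))
  rw [W0, W0, hfl] at h1
  have hBne : Bsel η k ≠ Bsel η' k := by
    have hv : (η k).val ≠ (η' k).val := fun hv => hk (Fin.ext hv)
    have h1 := (η k).isLt
    have h2 := (η' k).isLt
    unfold Bsel
    omega
  have hd : x (τ + (k : ℝ) + 1) ≠ x (τ + (k : ℝ)) := by
    rcases diff_step hx2 τ k with hh | hh
    · intro he; rw [he] at hh; apply hτ; linarith
    · intro he; rw [he] at hh; apply hτ; linarith
  rcases Bsel_mem η k with hb1 | hb1 <;> rcases Bsel_mem η' k with hb2 | hb2 <;>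
    rw [hb1, hb2] at h1 hBne <;> norm_num at h1 hBne <;> [skip; skip] <;> exact hd (by
      first
      | exact h1
      | exact h1.symm)

lemma Phi_continuous {f : ℝ × ℝ → ℝ} {x : ℝ → ℝ} {t₀ : ℝ}
    (hx : IsSolution f x) (hper : ∀ t x : ℝ, f (t + 1, x) = f (t, x))
    (hx2 : ∀ t : ℝ, x (t + 2) = x t) (hj : x (t₀ + 1) = x t₀) :
    Continuous (fun η => (⟨W0 x t₀ η, W0_continuous hx hper hx2 hj η⟩ : C(ℝ, ℝ))) := by
  rw [continuous_iff_continuousAt]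
  intro η
  rw [ContinuousAt, ContinuousMap.tendsto_iff_forall_isCompact_tendstoUniformlyOn]
  intro K hK
  obtain ⟨r, hr⟩ := hK.isBounded.subset_closedBall 0
  set L : ℤ := -(⌈r + |t₀|⌉ + 2) with hL
  set U : ℤ := ⌈r + |t₀|⌉ + 2 with hU
  intro u hu
  have hS : {η' : ℤ → Fin 2 | ∀ k ∈ Finset.Icc L U, η' k = η k} ∈ 𝓝 η := by
    apply IsOpen.mem_nhds
    · have he : {η' : ℤ → Fin 2 | ∀ k ∈ Finset.Icc L U, η' k = η k} =
          ⋂ k ∈ Finset.Icc L U, {η' : ℤ → Fin 2 | η' k = η k} := by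
        ext η'; simp
      rw [he]
      refine isOpen_biInter_finset fun k _ => ?_
      show IsOpen ((fun η' : ℤ → Fin 2 => η' k) ⁻¹' {η k})
      exact IsOpen.preimage (continuous_apply k) (isOpen_discrete ({η k} : Set (Fin 2)))
    · intro k _; rfl
  filter_upwards [hS] with η' hη'
  intro t ht
  have hb : |t| ≤ r := by
    have := hr ht
    rwa [Metric.mem_closedBall, Real.dist_eq, sub_zero] at this
  have hceil := Int.le_ceil (r + |t₀|)
  have habs := abs_le.mp hb
  have ht0a := neg_abs_le t₀
  have ht0b := le_abs_self t₀
  have hkmem : ⌊t - t₀⌋ ∈ Finset.Icc L U := by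
    rw [Finset.mem_Icc]
    constructor
    · apply Int.le_floor.mpr
      rw [hL, hU]
      push_cast
      linarith
    · have h1 : (⌊t - t₀⌋ : ℝ) ≤ t - t₀ := Int.floor_le _
      have h2 : (⌊t - t₀⌋ : ℝ) ≤ (U : ℝ) := by rw [hU]; push_cast; linarith
      exact_mod_cast h2
  have heq : W0 x t₀ η' t = W0 x t₀ η t := by
    unfold W0 Bsel
    rw [hη' _ hkmem]
  simp only [ContinuousMap.coe_mk]
  rw [heq]
  exact refl_mem_uniformity hu

/-- The Bernoulli shift as a homeomorphism of `Σ₂`. -/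
def shiftHomeo : (ℤ → Fin 2) ≃ₜ (ℤ → Fin 2) where
  toFun := bernoulliShift
  invFun := fun s i => s (i - 1)
  left_inv := fun s => funext fun i => by simp [bernoulliShift]
  right_inv := fun s => funext fun i => by simp [bernoulliShift]
  continuous_toFun := continuous_pi fun i => continuous_apply _
  continuous_invFun := continuous_pi fun i => continuous_apply _

lemma exists_t0 {f : ℝ × ℝ → ℝ} {x : ℝ → ℝ}
    (hx : IsSolution f x) (hx2 : ∀ t : ℝ, x (t + 2) = x t)
    (t₁ : ℝ) (ht₁ : x (t₁ + 1) ≠ x t₁) :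
    ∃ t₀ : ℝ, x (t₀ + 1) = x t₀ ∧ t₀ < t₁ ∧ t₁ < t₀ + 1 := by
  have hxc : Continuous x :=
    Differentiable.continuous fun t => (hx t).differentiableAt
  set g : ℝ → ℝ := fun t => x (t + 1) - x t with hg
  have hgc : Continuous g := (hxc.comp (by continuity)).sub hxc
  have hgm : g (t₁ - 1) = -(g t₁) := by
    have h1 : t₁ - 1 + 1 = t₁ := by ring
    have h2 : x (t₁ - 1) = x (t₁ + 1) := by
      have := hx2 (t₁ - 1)
      rw [show t₁ - 1 + 2 = t₁ + 1 by ring] at this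
      exact this.symm
    simp only [hg, h1, h2]
    ring
  have hgne : g t₁ ≠ 0 := sub_ne_zero.mpr ht₁
  have hle : t₁ - 1 ≤ t₁ := by linarith
  have key : ∃ t₀ ∈ Icc (t₁ - 1) t₁, g t₀ = 0 := by
    rcases lt_or_gt_of_ne hgne with hneg | hpos
    · have hsub := intermediate_value_Icc' hle hgc.continuousOn
      have h0 : (0 : ℝ) ∈ Icc (g t₁) (g (t₁ - 1)) := ⟨hneg.le, by rw [hgm]; linarith⟩
      obtain ⟨t₀, ht₀, hgt₀⟩ := hsub h0
      exact ⟨t₀, ht₀, hgt₀⟩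
    · have hsub := intermediate_value_Icc hle hgc.continuousOn
      have h0 : (0 : ℝ) ∈ Icc (g (t₁ - 1)) (g t₁) := ⟨by rw [hgm]; linarith, hpos.le⟩
      obtain ⟨t₀, ht₀, hgt₀⟩ := hsub h0
      exact ⟨t₀, ht₀, hgt₀⟩
  obtain ⟨t₀, ht₀, hgt₀⟩ := key
  refine ⟨t₀, sub_eq_zero.mp hgt₀, ?_, ?_⟩
  · rcases eq_or_lt_of_le ht₀.2 with rfl | h
    · exact absurd hgt₀ hgne
    · exact h
  · rcases eq_or_lt_of_le ht₀.1 with rfl | h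
    · exfalso; rw [hgm] at hgt₀; exact hgne (by linarith)
    · linarith

lemma main_homeo_aux (Φ : (ℤ → Fin 2) → C(ℝ, ℝ)) (hΦc : Continuous Φ)
    (hΦi : Function.Injective Φ)
    (hconj : ∀ η, Φ (bernoulliShift η) = shiftOne (Φ η)) :
    (∃ ψ : ↥(Set.range Φ) ≃ₜ ↥(Set.range Φ), ∀ w : ↥(Set.range Φ),
      (ψ w : C(ℝ, ℝ)) = shiftOne (w : C(ℝ, ℝ))) ∧
    (∃ φ : (ℤ → Fin 2) ≃ₜ ↥(Set.range Φ), ∀ η : ℤ → Fin 2,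
      (φ (bernoulliShift η) : C(ℝ, ℝ)) = shiftOne ((φ η : C(ℝ, ℝ)))) := by
  let e : (ℤ → Fin 2) ≃ ↥(Set.range Φ) := Equiv.ofInjective Φ hΦi
  have hφe : ∀ η, ((e η : ↥(Set.range Φ)) : C(ℝ, ℝ)) = Φ η := fun η => rfl
  have hce : Continuous e := by
    rw [show (⇑e) = fun η => (⟨Φ η, Set.mem_range_self η⟩ : ↥(Set.range Φ)) from
      funext fun η => Subtype.ext (hφe η)]
    exact hΦc.subtype_mk _
  let φh : (ℤ → Fin 2) ≃ₜ ↥(Set.range Φ) := hce.homeoOfEquivCompactToT2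
  have hφh : ∀ η, ((φh η : ↥(Set.range Φ)) : C(ℝ, ℝ)) = Φ η := hφe
  constructor
  · refine ⟨φh.symm.trans (shiftHomeo.trans φh), ?_⟩
    intro w
    have hw : ((φh (φh.symm w) : ↥(Set.range Φ)) : C(ℝ, ℝ)) = (w : C(ℝ, ℝ)) := by
      rw [Homeomorph.apply_symm_apply]
    calc ((φh.symm.trans (shiftHomeo.trans φh)) w : C(ℝ, ℝ))
        = Φ (bernoulliShift (φh.symm w)) := hφh _
      _ = shiftOne (Φ (φh.symm w)) := hconj _
      _ = shiftOne (w : C(ℝ, ℝ)) := by rw [← hφh (φh.symm w), hw]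
  · refine ⟨φh, ?_⟩
    intro η
    rw [hφh, hφh, hconj]

theorem conjugacy_with_bernoulli_shift
    (f : ℝ × ℝ → ℝ) (hf : Continuous f)
    (hper : ∀ t x : ℝ, f (t + 1, x) = f (t, x))
    (x : ℝ → ℝ) (hx : IsSolution f x)
    (hx2 : ∀ t : ℝ, x (t + 2) = x t)
    (t₁ : ℝ) (ht₁ : x (t₁ + 1) ≠ x t₁) :
    ∃ W : Set C(ℝ, ℝ), IsCompact W ∧
      (∀ w ∈ W, IsSolution f w) ∧
      shiftOne '' W = W ∧
      (∃ ψ : W ≃ₜ W, ∀ w : W, (ψ w : C(ℝ, ℝ)) = shiftOne (w : C(ℝ, ℝ))) ∧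
      (∃ φ : (ℤ → Fin 2) ≃ₜ W, ∀ η : ℤ → Fin 2,
        (φ (bernoulliShift η) : C(ℝ, ℝ)) = shiftOne ((φ η : C(ℝ, ℝ)))) := by
  obtain ⟨t₀, hj, hτ1, hτ2⟩ := exists_t0 hx hx2 t₁ ht₁
  set Φ : (ℤ → Fin 2) → C(ℝ, ℝ) :=
    fun η => (⟨W0 x t₀ η, W0_continuous hx hper hx2 hj η⟩ : C(ℝ, ℝ)) with hΦ
  have hΦc : Continuous Φ := Phi_continuous hx hper hx2 hj
  have hΦi : Function.Injective Φ := by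
    intro a b h
    exact W0_inj hx2 hτ1 hτ2 ht₁ (by
      have := congrArg (fun w : C(ℝ, ℝ) => (w : ℝ → ℝ)) h
      simpa [hΦ] using this)
  have hconj : ∀ η, Φ (bernoulliShift η) = shiftOne (Φ η) := by
    intro η
    ext t
    have := W0_shift (t₀ := t₀) hx2 η t
    simpa [hΦ, shiftOne] using this.symm
  refine ⟨Set.range Φ, isCompact_range hΦc, ?_, ?_, ?_, ?_⟩
  · rintro w ⟨η, rfl⟩
    intro t
    exact W0_hasDeriv hx hper hx2 hj η t
  · ext w
    constructor
    · rintro ⟨_, ⟨η, rfl⟩, rfl⟩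
      exact ⟨bernoulliShift η, hconj η⟩
    · rintro ⟨η, rfl⟩
      refine ⟨Φ (fun i => η (i - 1)), ⟨_, rfl⟩, ?_⟩
      rw [← hconj]
      congr 1
      funext i
      simp [bernoulliShift]
  · -- ψ and φ parts share the homeomorphism
    exact main_homeo_aux Φ hΦc hΦi hconj |>.1
  · exact main_homeo_aux Φ hΦc hΦi hconj |>.2
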